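/- Let G be a connected triangle-free graph with no full star-cutset. Then G has no cut-vertex of degree at least 3. Moreover, if G is not a path on at most 4 vertices, then every vertex of G has degree at least 2. -/

import Mathlib

/-! ## Frames and restricted frame graphs -/

/-- An axis-parallel box in `ℝ²`, i.e. a product `[x1,x2] × [y1,y2]` of two closed
nondegenerate intervals. -/
structure Box : Type where
  x1 : ℝ
  x2 : ℝ
  y1 : ℝ
  y2 : ℝ
  hx : x1 < x2
  hy : y1 < y2

namespace Box

/-- The region bounded by the frame of a box: the closed box itself. -/
def region (B : Box) : Set (ℝ × ℝ) :=
  {p : ℝ × ℝ | B.x1 ≤ p.1 ∧ p.1 ≤ B.x2 ∧ B.y1 ≤ p.2 ∧ p.2 ≤ B.y2}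

/-- The frame of a box: the topological boundary of the closed box. -/
def frame (B : Box) : Set (ℝ × ℝ) :=
  {p : ℝ × ℝ | p ∈ B.region ∧ (p.1 = B.x1 ∨ p.1 = B.x2 ∨ p.2 = B.y1 ∨ p.2 = B.y2)}

/-- The left side `{x1} × [y1,y2]` of a frame. -/
def leftSide (B : Box) : Set (ℝ × ℝ) :=
  {p : ℝ × ℝ | p.1 = B.x1 ∧ B.y1 ≤ p.2 ∧ p.2 ≤ B.y2}

/-- The right side `{x2} × [y1,y2]` of a frame. -/
def rightSide (B : Box) : Set (ℝ × ℝ) :=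
  {p : ℝ × ℝ | p.1 = B.x2 ∧ B.y1 ≤ p.2 ∧ p.2 ≤ B.y2}

/-- The top side `[x1,x2] × {y2}` of a frame. -/
def topSide (B : Box) : Set (ℝ × ℝ) :=
  {p : ℝ × ℝ | p.2 = B.y2 ∧ B.x1 ≤ p.1 ∧ p.1 ≤ B.x2}

/-- The bottom side `[x1,x2] × {y1}` of a frame. -/
def bottomSide (B : Box) : Set (ℝ × ℝ) :=
  {p : ℝ × ℝ | p.2 = B.y1 ∧ B.x1 ≤ p.1 ∧ p.1 ≤ B.x2}

/-- The four corners of a frame. -/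
def corners (B : Box) : Set (ℝ × ℝ) :=
  {(B.x1, B.y1), (B.x1, B.y2), (B.x2, B.y1), (B.x2, B.y2)}

/-- `Box.Inside inner outer` : the frame of `outer` contains the frame of `inner`,
i.e. the two frames are disjoint and the frame of `inner` is contained in the region
bounded by the frame of `outer`. -/
def Inside (inner outer : Box) : Prop :=
  inner.frame ∩ outer.frame = ∅ ∧ inner.frame ⊆ outer.region

/-- `Box.Outside B outer` : the frames are disjoint and `B` is not inside `outer`. -/
def Outside (B outer : Box) : Prop :=
  B.frame ∩ outer.frame = ∅ ∧ ¬ Inside B outer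

end Box

/-- A family of frames `(F v)` is a representation of the graph `G` as a restricted
frame graph: distinct vertices are adjacent iff their frames intersect, and the four
restrictions on the representation hold. -/
structure IsFrameRepresentation {V : Type} (G : SimpleGraph V) (F : V → Box) : Prop where
  /-- Distinct vertices are adjacent iff their frames intersect. -/
  adj_iff : ∀ u v : V, u ≠ v → (G.Adj u v ↔ ((F u).frame ∩ (F v).frame).Nonempty)
  /-- (1) Corners of a frame do not coincide with any point of another frame. -/
  corner_free : ∀ u v : V, u ≠ v → (F u).corners ∩ (F v).frame = ∅
  /-- (2) The left side of a frame does not intersect any other frame. -/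
  left_free : ∀ u v : V, u ≠ v → (F u).leftSide ∩ (F v).frame = ∅
  /-- (3) If the right side of a frame intersects a second frame, this right side
  intersects both the top and the bottom side of that second frame. -/
  right_cross : ∀ u v : V, u ≠ v →
    ((F u).rightSide ∩ (F v).frame).Nonempty →
    ((F u).rightSide ∩ (F v).topSide).Nonempty ∧
      ((F u).rightSide ∩ (F v).bottomSide).Nonempty
  /-- (4) If two frames intersect, no third frame is entirely contained in the
  intersection of the regions bounded by the two frames. -/
  not_nested : ∀ u v w : V, u ≠ v → w ≠ u → w ≠ v →
    ((F u).frame ∩ (F v).frame).Nonempty →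
    ¬ ((F w).frame ⊆ (F u).region ∩ (F v).region)

/-- A graph is a restricted frame graph if it admits a frame representation. -/
def IsRestrictedFrameGraph {V : Type} (G : SimpleGraph V) : Prop :=
  ∃ F : V → Box, IsFrameRepresentation G F

/-! ## Basic graph notions -/

/-- The closed neighborhood `N[u] = {u} ∪ N(u)`. -/
def closedNbhd {V : Type} (G : SimpleGraph V) (u : V) : Set V :=
  insert u (G.neighborSet u)

/-- `G` has a full star-cutset: for some vertex `u` the removal of `N[u]`
disconnects `G`. -/
def HasFullStarCutset {V : Type} (G : SimpleGraph V) : Prop :=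
  ∃ u : V, ¬ (G.induce ((closedNbhd G u)ᶜ)).Preconnected

/-- `v` is a cut-vertex of `G`: its removal disconnects `G`. -/
def IsCutVertex {V : Type} (G : SimpleGraph V) (v : V) : Prop :=
  ¬ (G.induce {u : V | u ≠ v}).Preconnected

/-- `G` is a path graph: its vertices can be enumerated `0, …, n-1` so that two
vertices are adjacent iff they are consecutive. -/
def IsPathGraph {V : Type} (G : SimpleGraph V) : Prop :=
  ∃ (n : ℕ) (e : V ≃ Fin n), ∀ u v : V,
    G.Adj u v ↔ ((e u : ℕ) + 1 = (e v : ℕ) ∨ (e v : ℕ) + 1 = (e u : ℕ))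

/-- `G` is a cycle graph (on at least 3 vertices). -/
def IsCycleGraphOn {V : Type} (G : SimpleGraph V) : Prop :=
  ∃ n : ℕ, 3 ≤ n ∧ ∃ e : V ≃ Fin n, ∀ u v : V,
    G.Adj u v ↔ (((e u : ℕ) + 1) % n = (e v : ℕ) ∨ ((e v : ℕ) + 1) % n = (e u : ℕ))

/-- `x` is a leaf of `T`: it has exactly one neighbor. -/
def IsLeaf {V : Type} (T : SimpleGraph V) (x : V) : Prop :=
  (T.neighborSet x).ncard = 1

/-- `G` is a chandelier with pivot `v`: `G - v` is a tree `T` and `v` is adjacent to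
exactly the leaves of `T`. -/
def IsChandelierWithPivot {V : Type} (G : SimpleGraph V) (v : V) : Prop :=
  (G.induce {u : V | u ≠ v}).IsTree ∧
    ∀ u : ↥{u : V | u ≠ v}, (G.Adj v u.val ↔ IsLeaf (G.induce {u : V | u ≠ v}) u)

/-- `G` is a chandelier. -/
def IsChandelier {V : Type} (G : SimpleGraph V) : Prop :=
  ∃ v : V, IsChandelierWithPivot G v

/-- `G` is a luxury chandelier: a chandelier (with pivot `v` and tree `T = G - v`)
such that the neighbor in `T` of each leaf of `T` has degree 2 in `T`. -/
def IsLuxuryChandelier {V : Type} (G : SimpleGraph V) : Prop :=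
  ∃ v : V, IsChandelierWithPivot G v ∧
    ∀ x y : ↥{u : V | u ≠ v}, (G.induce {u : V | u ≠ v}).Adj x y →
      IsLeaf (G.induce {u : V | u ≠ v}) x →
      ((G.induce {u : V | u ≠ v}).neighborSet y).ncard = 2

/-! ## Multigraphs and subdivisions -/

/-- A loopless multigraph on vertex set `V`: a symmetric multiplicity function. -/
structure Multigraph (V : Type) where
  m : V → V → ℕ
  symm : ∀ u v : V, m u v = m v u
  loopless : ∀ v : V, m v v = 0

/-- The multigraph associated with a simple graph (each edge has multiplicity 1). -/
noncomputable def SimpleGraph.toMultigraph {V : Type} (G : SimpleGraph V) : Multigraph V where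
  m u v := @ite ℕ (G.Adj u v) (Classical.dec _) 1 0
  symm u v := by
    beta_reduce
    by_cases h : G.Adj u v
    · rw [if_pos h, if_pos (G.symm.symm _ _ h)]
    · rw [if_neg h, if_neg (fun h' => h (G.symm.symm _ _ h'))]
  loopless v := by
    beta_reduce
    rw [if_neg (G.loopless.irrefl v)]

/-- The interior (set of internal vertices) of a walk. -/
def walkInterior {V : Type} {G : SimpleGraph V} {a b : V} (p : G.Walk a b) : Set V :=
  {w : V | w ∈ p.support ∧ w ≠ a ∧ w ≠ b}

/-- A witness that the simple graph `H` is a `≥k`-subdivision of the multigraph `G`: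
each edge of `G` (counted with multiplicity) is replaced by a path with at least
`k+1` edges between (the images of) its endpoints, these paths being internally
disjoint from each other and from the branch vertices, and covering all of `H`. -/
structure MultiSubdivision {V W : Type} (G : Multigraph V) (H : SimpleGraph W) (k : ℕ) where
  /-- the embedding of branch vertices -/
  f : V ↪ W
  /-- the path replacing the `i`-th parallel edge between `u` and `v` -/
  path : ∀ u v : V, Fin (G.m u v) → H.Walk (f u) (f v)
  path_symm : ∀ (u v : V) (i : Fin (G.m u v)),
    path v u (Fin.cast (G.symm u v) i) = (path u v i).reverse
  path_ne : ∀ (u v : V) (i i' : Fin (G.m u v)), (i : ℕ) ≠ (i' : ℕ) →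
    path u v i ≠ path u v i'
  isPath : ∀ (u v : V) (i : Fin (G.m u v)), (path u v i).IsPath
  length_le : ∀ (u v : V) (i : Fin (G.m u v)), k + 1 ≤ (path u v i).length
  /-- the paths are internally disjoint from the branch vertices -/
  interior_avoid : ∀ (u v : V) (i : Fin (G.m u v)) (x : V),
    f x ∉ walkInterior (path u v i)
  /-- distinct paths are pairwise internally disjoint -/
  interior_disjoint : ∀ (u v : V) (i : Fin (G.m u v)) (u' v' : V) (i' : Fin (G.m u' v')),
    (walkInterior (path u v i) ∩ walkInterior (path u' v' i')).Nonempty →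
    (u = u' ∧ v = v' ∧ (i : ℕ) = (i' : ℕ)) ∨ (u = v' ∧ v = u' ∧ (i : ℕ) = (i' : ℕ))
  /-- every vertex of `H` is a branch vertex or an internal vertex of a path -/
  vertex_cover : ∀ w : W, (∃ x : V, f x = w) ∨
    ∃ (u v : V) (i : Fin (G.m u v)), w ∈ walkInterior (path u v i)
  /-- every edge of `H` lies on one of the paths -/
  edge_cover : ∀ e ∈ H.edgeSet, ∃ (u v : V) (i : Fin (G.m u v)), e ∈ (path u v i).edges

/-- `H` is a `≥k`-subdivision of the multigraph `G`. -/
def IsSubdivisionGE {V W : Type} (G : Multigraph V) (k : ℕ) (H : SimpleGraph W) : Prop :=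
  Nonempty (MultiSubdivision G H k)

/-- `H` is a subdivision of the simple graph `G` (every edge is replaced by a path
with at least one edge). -/
def IsSubdivision {V W : Type} (G : SimpleGraph V) (H : SimpleGraph W) : Prop :=
  IsSubdivisionGE G.toMultigraph 0 H

namespace Multigraph

/-- The underlying simple graph of a multigraph. -/
def support {V : Type} (G : Multigraph V) : SimpleGraph V where
  Adj u v := 0 < G.m u v
  symm := by
    refine ⟨?_⟩
    intro u v h
    rw [G.symm v u]
    exact h
  loopless := by
    refine ⟨?_⟩
    intro v h
    rw [G.loopless v] at h
    exact Nat.lt_irrefl 0 h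

/-- A multigraph is connected if its underlying simple graph is. -/
def Connected {V : Type} (G : Multigraph V) : Prop :=
  G.support.Connected

/-- A multigraph is 2-connected if it is connected, has at least two vertices, and
deleting any single vertex leaves it connected. -/
def TwoConnected {V : Type} (G : Multigraph V) : Prop :=
  G.support.Connected ∧ (∃ u v : V, u ≠ v) ∧
    ∀ v : V, (G.support.induce {u : V | u ≠ v}).Connected

/-- `v` is a feedback vertex of the multigraph `G`: `G - v` contains no cycle
(where a pair of parallel edges forms a cycle of length 2). -/
def IsFeedbackVertex {V : Type} (G : Multigraph V) (v : V) : Prop :=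
  (G.support.induce {u : V | u ≠ v}).IsAcyclic ∧
    ∀ u w : V, u ≠ v → w ≠ v → G.m u w ≤ 1

end Multigraph

/-! ## Induced cycles and big vertices -/

/-- `C` induces a cycle in `G`. -/
def IsInducedCycle {V : Type} (G : SimpleGraph V) (C : Set V) : Prop :=
  IsCycleGraphOn (G.induce C)

/-- `v` is a big vertex of the (induced cycle on) `C` with respect to the frame
representation `F`: `v ∈ C` and `F v` contains the frame of every vertex of `C`
outside `N[v]`. -/
def IsBigVertexOf {V : Type} (G : SimpleGraph V) (F : V → Box) (C : Set V) (v : V) : Prop :=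
  v ∈ C ∧ ∀ u ∈ C, u ≠ v → ¬ G.Adj v u → Box.Inside (F u) (F v)

/-- `v` is a big vertex of the representation `F`: it is a big vertex of some
induced cycle of `G`. -/
def IsBigVertex {V : Type} (G : SimpleGraph V) (F : V → Box) (v : V) : Prop :=
  ∃ C : Set V, IsInducedCycle G C ∧ IsBigVertexOf G F C v

/-! ## Gluing a chandelier onto a vertex -/

/-- The graph obtained from the disjoint union of `G₁` and `G₂` by identifying the
vertex `v` of `G₁` with the vertex `p` of `G₂`. -/
def glueAt {V₁ V₂ : Type} (G₁ : SimpleGraph V₁) (G₂ : SimpleGraph V₂) (v : V₁) (p : V₂) :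
    SimpleGraph (V₁ ⊕ {x : V₂ // x ≠ p}) :=
  SimpleGraph.fromRel (fun a b =>
    match a, b with
    | Sum.inl u, Sum.inl w => G₁.Adj u w
    | Sum.inr u, Sum.inr w => G₂.Adj u.val w.val
    | Sum.inl u, Sum.inr w => u = v ∧ G₂.Adj p w.val
    | Sum.inr _, Sum.inl _ => False)

/-! ## The multigraphs `Ĥ₁` and `Ĥ₂` -/

/-- The multiplicity matrix of `Ĥ₁` (vertices `a₁ = 0`, `b₁ = 1`, `v₁ = 2`, `v₂ = 3`,
`a₂ = 4`, `b₂ = 5`). -/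
def H1hatMatrix : Matrix (Fin 6) (Fin 6) ℕ :=
  !![0, 2, 1, 0, 0, 0;
     2, 0, 1, 0, 0, 0;
     1, 1, 0, 1, 0, 0;
     0, 0, 1, 0, 1, 1;
     0, 0, 0, 1, 0, 2;
     0, 0, 0, 1, 2, 0]

/-- The multigraph `Ĥ₁`: two disjoint digons `a₁b₁`, `a₂b₂`, and single edges
`a₁v₁`, `b₁v₁`, `v₁v₂`, `a₂v₂`, `b₂v₂`. -/
def H1hat : Multigraph (Fin 6) where
  m u v := H1hatMatrix u v
  symm := by
    intro u v
    fin_cases u <;> fin_cases v <;> first | rfl | decide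
  loopless := by decide

/-- The multiplicity matrix of `Ĥ₂` (vertices `a₁ = 0`, `b₁ = 1`, `v = 2`,
`a₂ = 3`, `b₂ = 4`). -/
def H2hatMatrix : Matrix (Fin 5) (Fin 5) ℕ :=
  !![0, 2, 1, 0, 0;
     2, 0, 1, 0, 0;
     1, 1, 0, 1, 1;
     0, 0, 1, 0, 2;
     0, 0, 1, 2, 0]

/-- The multigraph `Ĥ₂`: two digons `a₁b₁`, `a₂b₂`, and single edges
`a₁v`, `b₁v`, `a₂v`, `b₂v`. -/
def H2hat : Multigraph (Fin 5) where
  m u v := H2hatMatrix u v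
  symm := by
    intro u v
    fin_cases u <;> fin_cases v <;> first | rfl | decide
  loopless := by decide

/-! ## Subdivisions of `K₄` and their type -/

/-- The complete graph on four vertices. -/
def K4 : SimpleGraph (Fin 4) := ⊤

/-- The set of edges of `K₄` that are subdivided at least once in the subdivision
witnessed by `S` (i.e. replaced by a path with at least two edges). -/
def subdividedEdges {W : Type} {H : SimpleGraph W}
    (S : MultiSubdivision K4.toMultigraph H 0) : Set (Sym2 (Fin 4)) :=
  {e : Sym2 (Fin 4) | ∃ (u v : Fin 4) (i : Fin (K4.toMultigraph.m u v)),
    e = s(u, v) ∧ 2 ≤ (S.path u v i).length}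

/-! ## Adding a twin -/

/-- The graph obtained from `G` by adding a twin of `v`: a new vertex, non-adjacent
to `v`, whose neighborhood is exactly `N(v)`. -/
def addTwin {V : Type} (G : SimpleGraph V) (v : V) : SimpleGraph (V ⊕ Unit) :=
  SimpleGraph.fromRel (fun a b =>
    match a, b with
    | Sum.inl u, Sum.inl w => G.Adj u w
    | Sum.inr _, Sum.inl u => G.Adj v u
    | _, _ => False)

/-! ## The construction of Burling and Pawlik et al. -/

/-- A graph-stable set pair: a graph together with a collection of sets of vertices
(intended: stable sets). -/
structure GSPair : Type 1 where
  V : Type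
  G : SimpleGraph V
  S : Set (Set V)

namespace GSPair

/-- The vertex type of `next P`: the original vertices, the vertices `(s, u)` of the
copy `H_s` of the graph for each `s ∈ 𝒮`, and the new vertices `v_{s,t}`. -/
abbrev nextVertex (P : GSPair) : Type :=
  P.V ⊕ ((↥P.S × P.V) ⊕ (↥P.S × ↥P.S))

/-- The adjacency generator for the graph of `next P`. -/
def nextRel (P : GSPair) : P.nextVertex → P.nextVertex → Prop
  | Sum.inl u, Sum.inl v => P.G.Adj u v
  | Sum.inr (Sum.inl (s, u)), Sum.inr (Sum.inl (t, v)) => s = t ∧ P.G.Adj u v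
  | Sum.inr (Sum.inr (s, t)), Sum.inr (Sum.inl (s', v)) => s = s' ∧ v ∈ (t : Set P.V)
  | _, _ => False

/-- The procedure `next`: add a disjoint copy `H_s` of the graph for each `s ∈ 𝒮`, a
vertex `v_{s,t}` whose neighborhood is exactly the copy of `t` inside `H_s` for all
`s, t ∈ 𝒮`, and take as new collection of stable sets all `s ∪ t_s` and
`s ∪ {v_{s,t}}`. -/
def next (P : GSPair) : GSPair where
  V := P.nextVertex
  G := SimpleGraph.fromRel P.nextRel
  S := {A : Set P.nextVertex | ∃ s t : ↥P.S,
    A = (Sum.inl '' (s : Set P.V) : Set P.nextVertex) ∪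
        ((fun u : P.V => (Sum.inr (Sum.inl (s, u)) : P.nextVertex)) '' (t : Set P.V)) ∨
    A = (Sum.inl '' (s : Set P.V) : Set P.nextVertex) ∪ {Sum.inr (Sum.inr (s, t))}}

/-- The starting pair: a single vertex, with the single stable set consisting of
that vertex. -/
def base : GSPair := ⟨PUnit, ⊥, {Set.univ}⟩

/-- `P` is an induced subgraph-stable set pair of `Q`. -/
def IsInducedSubpair (P Q : GSPair) : Prop :=
  ∃ f : P.V ↪ Q.V, (∀ u v : P.V, P.G.Adj u v ↔ Q.G.Adj (f u) (f v)) ∧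
    ∀ A ∈ P.S, ∃ B ∈ Q.S, A = f ⁻¹' B

/-- A graph-stable set pair is constructible if it is an induced subgraph-stable set
pair of some iterate of `next` on the starting pair. -/
def Constructible (P : GSPair) : Prop :=
  ∃ i : ℕ, IsInducedSubpair P (next^[i] base)

end GSPair



/-! ## Auxiliary lemmas for Statement 11 -/

section AuxStatement11

variable {V : Type} {G : SimpleGraph V}

private lemma aux_reach_of_walk {S : Set V} {x y : V} (p : G.Walk x y)
    (hp : ∀ z ∈ p.support, z ∈ S) (hx : x ∈ S) (hy : y ∈ S) :
    (G.induce S).Reachable ⟨x, hx⟩ ⟨y, hy⟩ := by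
  induction p with
  | nil => rfl
  | @cons u w y h q ih =>
    have hw : w ∈ S := hp w (by simp)
    have h1 : (G.induce S).Adj ⟨u, hx⟩ ⟨w, hw⟩ := h
    exact h1.reachable.trans (ih (fun z hz => hp z (by simp [hz])) hw hy)

private lemma aux_reach_mono {S T : Set V} (hST : S ⊆ T) {x y : V} (hx : x ∈ S) (hy : y ∈ S)
    (h : (G.induce S).Reachable ⟨x, hx⟩ ⟨y, hy⟩) :
    (G.induce T).Reachable ⟨x, hST hx⟩ ⟨y, hST hy⟩ := by
  let φ : G.induce S →g G.induce T := ⟨fun z => ⟨z.1, hST z.2⟩, fun {a b} ha => ha⟩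
  exact h.map φ

private lemma aux_iso_eq {S : Set V} (hpre : (G.induce S).Preconnected) {w : V} (hw : w ∈ S)
    (hiso : ∀ z, G.Adj w z → z ∉ S) {y : V} (hy : y ∈ S) : y = w := by
  by_contra hne
  obtain ⟨p⟩ := hpre ⟨w, hw⟩ ⟨y, hy⟩
  have hnn : ¬ p.Nil := SimpleGraph.Walk.not_nil_of_ne (fun h => hne (congrArg Subtype.val h).symm)
  have hadj := SimpleGraph.Walk.adj_snd hnn
  exact hiso _ hadj (p.getVert 1).2

private lemma aux_walk_closed {S : Set V} (hcl : ∀ x ∈ S, ∀ y, G.Adj x y → y ∈ S) :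
    ∀ {a c : V}, G.Walk a c → a ∈ S → c ∈ S := by
  intro a c p
  induction p with
  | nil => exact id
  | cons h q ih => exact fun ha => ih (hcl _ ha _ h)

private lemma aux_pendant_of_cut (hconn : G.Connected) (htf : G.CliqueFree 3)
    (hnsc : ∀ u : V, (G.induce ((closedNbhd G u)ᶜ)).Preconnected) {v : V}
    (hcut : ¬ (G.induce {u : V | u ≠ v}).Preconnected) :
    ∃ w, G.Adj v w ∧ ∀ z, G.Adj w z → z = v := by
  classical
  set S : Set V := {u : V | u ≠ v} with hS
  rw [SimpleGraph.Preconnected] at hcut; push_neg at hcut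
  obtain ⟨a, b, hab⟩ := hcut
  have split : ∀ {c : V} (r : G.Walk v c), r.support.count v = 1 → c ≠ v →
      ∃ x, G.Adj v x ∧ ∃ r' : G.Walk x c, v ∉ r'.support := by
    intro c r hr hc
    cases r with
    | nil => exact absurd rfl hc
    | cons h r' =>
      refine ⟨_, h, r', ?_⟩
      rw [SimpleGraph.Walk.support_cons, List.count_cons_self] at hr
      have : r'.support.count v = 0 := by omega
      exact List.count_eq_zero.mp this
  have reachN : ∀ (c : V) (hc : c ≠ v), ∃ x, ∃ hx : G.Adj v x,
      (G.induce S).Reachable ⟨c, hc⟩ ⟨x, hx.ne'⟩ := by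
    intro c hc
    obtain ⟨p⟩ := hconn.preconnected c v
    have hvmem : v ∈ p.support := p.end_mem_support
    have hcount : (p.takeUntil v hvmem).reverse.support.count v = 1 := by
      rw [SimpleGraph.Walk.support_reverse, List.count_reverse]
      exact p.count_support_takeUntil_eq_one hvmem
    obtain ⟨x, hx, r', hr'⟩ := split (p.takeUntil v hvmem).reverse hcount hc
    have hmem : ∀ z ∈ r'.support, z ∈ S := fun z hz hzv => hr' (hzv ▸ hz)
    exact ⟨x, hx, (aux_reach_of_walk r' hmem (hmem _ r'.start_mem_support) hc).symm⟩
  obtain ⟨x, hx, hax⟩ := reachN a.1 a.2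
  obtain ⟨y, hy, hby⟩ := reachN b.1 b.2
  have hxy : ¬ (G.induce S).Reachable ⟨x, hx.ne'⟩ ⟨y, hy.ne'⟩ := fun h =>
    hab (hax.trans (h.trans hby.symm))
  have escape : ∀ (w : V) (hw : G.Adj v w),
      (∃ z, ∃ hz : z ≠ v, (G.induce S).Reachable ⟨w, hw.ne'⟩ ⟨z, hz⟩ ∧ ¬ G.Adj v z) ∨
        (∀ z, G.Adj w z → z = v) := by
    intro w hw
    by_cases hcl : ∃ z, ∃ hz : z ≠ v, (G.induce S).Reachable ⟨w, hw.ne'⟩ ⟨z, hz⟩ ∧ ¬ G.Adj v z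
    · exact Or.inl hcl
    · push_neg at hcl
      refine Or.inr fun z hz => ?_
      by_contra hzv
      have hadj : (G.induce S).Adj ⟨w, hw.ne'⟩ ⟨z, hzv⟩ := hz
      have hvz : G.Adj v z := hcl z hzv hadj.reachable
      exact htf {v, w, z} (SimpleGraph.is3Clique_triple_iff.mpr ⟨hw, hvz, hz⟩)
  rcases escape x hx with hex | hpend
  · rcases escape y hy with hey | hpend'
    · obtain ⟨p, hpv, hxp, hvp⟩ := hex
      obtain ⟨q, hqv, hyq, hvq⟩ := hey
      have hpC : p ∈ (closedNbhd G v)ᶜ := by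
        simp only [closedNbhd, Set.mem_compl_iff, Set.mem_insert_iff,
          SimpleGraph.mem_neighborSet]
        push_neg; exact ⟨hpv, fun h => hvp h⟩
      have hqC : q ∈ (closedNbhd G v)ᶜ := by
        simp only [closedNbhd, Set.mem_compl_iff, Set.mem_insert_iff,
          SimpleGraph.mem_neighborSet]
        push_neg; exact ⟨hqv, fun h => hvq h⟩
      have hsub : (closedNbhd G v)ᶜ ⊆ S := by
        intro z hz hzv
        exact hz (by simp [closedNbhd, hzv])
      have h2 := aux_reach_mono hsub hpC hqC (hnsc v ⟨p, hpC⟩ ⟨q, hqC⟩)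
      exact absurd (hxp.trans (h2.trans hyq.symm)) hxy
    · exact ⟨y, hy, hpend'⟩
  · exact ⟨x, hx, hpend⟩

private lemma aux_complement
    (hnsc : ∀ u : V, (G.induce ((closedNbhd G u)ᶜ)).Preconnected) {v w x : V}
    (hvw : G.Adj v w) (hpend : ∀ z, G.Adj w z → z = v)
    (hxv : G.Adj x v) (hxw : x ≠ w) :
    ∀ y, y ∉ closedNbhd G x → y = w := by
  intro y hy
  have hw : w ∈ (closedNbhd G x)ᶜ := by
    intro hmem
    simp only [closedNbhd, Set.mem_insert_iff, SimpleGraph.mem_neighborSet] at hmem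
    rcases hmem with h | h
    · exact hxw (h.symm)
    · exact hxv.ne (hpend x h.symm)
  refine aux_iso_eq (hnsc x) hw (fun z hz => ?_) hy
  rw [hpend z hz]
  simp only [closedNbhd, Set.mem_compl_iff, Set.mem_insert_iff,
    SimpleGraph.mem_neighborSet, not_not]
  exact Or.inr hxv

private lemma aux_path1 [Fintype V] {a : V} (hcov : ∀ z : V, z = a) :
    IsPathGraph G ∧ Fintype.card V ≤ 4 := by
  constructor
  · refine ⟨1, ⟨fun _ => 0, fun _ => a, fun z => (hcov z).symm,
      fun i => Subsingleton.elim _ _⟩, fun u v => ?_⟩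
    rw [hcov u, hcov v]
    simp [G.irrefl]
  · have hsub : (Finset.univ : Finset V) ⊆ {a} := fun z _ => by
      rcases hcov z with rfl; simp
    have h2 := Finset.card_le_card hsub
    rw [Finset.card_univ] at h2
    simp only [Finset.card_singleton] at h2
    omega

private lemma aux_path2 [Fintype V] [DecidableEq V] {a b : V} (hab : a ≠ b)
    (hcov : ∀ z : V, z = a ∨ z = b) (e1 : G.Adj a b) :
    IsPathGraph G ∧ Fintype.card V ≤ 4 := by
  constructor
  · refine ⟨2, ⟨fun z => if z = a then ⟨0, by omega⟩ else ⟨1, by omega⟩,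
      fun i => if (i : ℕ) = 0 then a else b, ?_, ?_⟩, ?_⟩
    · intro z; rcases hcov z with rfl | rfl <;> simp [hab, Ne.symm hab, Fin.val_mk]
    · intro i; fin_cases i <;> simp [hab, Ne.symm hab, Fin.val_mk]
    · intro u v
      rcases hcov u with rfl | rfl <;> rcases hcov v with rfl | rfl <;>
        simp [hab, Ne.symm hab, G.irrefl, e1, e1.symm, Fin.val_mk]
  · have hsub : (Finset.univ : Finset V) ⊆ {a, b} := fun z _ => by
      rcases hcov z with rfl | rfl <;> simp
    have h2 := Finset.card_le_card hsub
    rw [Finset.card_univ] at h2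
    have h3 : ({a, b} : Finset V).card ≤ 2 :=
      le_trans (Finset.card_insert_le _ _) (by simp)
    omega

private lemma aux_path3 [Fintype V] [DecidableEq V] {a b c : V}
    (hab : a ≠ b) (hac : a ≠ c) (hbc : b ≠ c)
    (hcov : ∀ z : V, z = a ∨ z = b ∨ z = c)
    (e1 : G.Adj a b) (e2 : G.Adj b c) (n1 : ¬ G.Adj a c) :
    IsPathGraph G ∧ Fintype.card V ≤ 4 := by
  have n1' : ¬ G.Adj c a := fun h => n1 h.symm
  constructor
  · refine ⟨3, ⟨fun z => if z = a then ⟨0, by omega⟩ else if z = b then ⟨1, by omega⟩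
        else ⟨2, by omega⟩,
      fun i => if (i : ℕ) = 0 then a else if (i : ℕ) = 1 then b else c, ?_, ?_⟩, ?_⟩
    · intro z; rcases hcov z with rfl | rfl | rfl <;>
        simp [hab, hac, hbc, Ne.symm hab, Ne.symm hac, Ne.symm hbc, Fin.val_mk]
    · intro i; fin_cases i <;>
        simp [hab, hac, hbc, Ne.symm hab, Ne.symm hac, Ne.symm hbc, Fin.val_mk]
    · intro u v
      rcases hcov u with rfl | rfl | rfl <;> rcases hcov v with rfl | rfl | rfl <;>
        simp [hab, hac, hbc, Ne.symm hab, Ne.symm hac, Ne.symm hbc, G.irrefl,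
          e1, e2, e1.symm, e2.symm, n1, n1', Fin.val_mk]
  · have hsub : (Finset.univ : Finset V) ⊆ {a, b, c} := fun z _ => by
      rcases hcov z with rfl | rfl | rfl <;> simp
    have h2 := Finset.card_le_card hsub
    rw [Finset.card_univ] at h2
    have h4 : ({b, c} : Finset V).card ≤ 2 :=
      le_trans (Finset.card_insert_le _ _) (by simp)
    have h3 : ({a, b, c} : Finset V).card ≤ 3 :=
      le_trans (Finset.card_insert_le _ _) (by omega)
    omega

private lemma aux_path4 [Fintype V] [DecidableEq V] {a b c d : V}
    (hab : a ≠ b) (hac : a ≠ c) (had : a ≠ d)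
    (hbc : b ≠ c) (hbd : b ≠ d) (hcd : c ≠ d)
    (hcov : ∀ z : V, z = a ∨ z = b ∨ z = c ∨ z = d)
    (e1 : G.Adj a b) (e2 : G.Adj b c) (e3 : G.Adj c d)
    (n1 : ¬ G.Adj a c) (n2 : ¬ G.Adj a d) (n3 : ¬ G.Adj b d) :
    IsPathGraph G ∧ Fintype.card V ≤ 4 := by
  have n1' : ¬ G.Adj c a := fun h => n1 h.symm
  have n2' : ¬ G.Adj d a := fun h => n2 h.symm
  have n3' : ¬ G.Adj d b := fun h => n3 h.symm
  have hv3 : ((3 : Fin 4) : ℕ) = 3 := rfl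
  constructor
  · refine ⟨4, ⟨fun z => if z = a then ⟨0, by omega⟩ else if z = b then ⟨1, by omega⟩
        else if z = c then ⟨2, by omega⟩ else ⟨3, by omega⟩,
      fun i => if (i : ℕ) = 0 then a else if (i : ℕ) = 1 then b
        else if (i : ℕ) = 2 then c else d, ?_, ?_⟩, ?_⟩
    · intro z; rcases hcov z with rfl | rfl | rfl | rfl <;>
        simp [hab, hac, had, hbc, hbd, hcd, Fin.val_mk, hv3,
          Ne.symm hab, Ne.symm hac, Ne.symm had, Ne.symm hbc, Ne.symm hbd, Ne.symm hcd]
    · intro i; fin_cases i <;>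
        simp [hab, hac, had, hbc, hbd, hcd, Fin.val_mk, hv3,
          Ne.symm hab, Ne.symm hac, Ne.symm had, Ne.symm hbc, Ne.symm hbd, Ne.symm hcd]
    · intro u v
      rcases hcov u with rfl | rfl | rfl | rfl <;> rcases hcov v with rfl | rfl | rfl | rfl <;>
        simp [hab, hac, had, hbc, hbd, hcd, Fin.val_mk, hv3,
          Ne.symm hab, Ne.symm hac, Ne.symm had, Ne.symm hbc, Ne.symm hbd, Ne.symm hcd,
          G.irrefl, e1, e2, e3, e1.symm, e2.symm, e3.symm, n1, n2, n3, n1', n2', n3']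
  · have hsub : (Finset.univ : Finset V) ⊆ {a, b, c, d} := fun z _ => by
      rcases hcov z with rfl | rfl | rfl | rfl <;> simp
    have h2 := Finset.card_le_card hsub
    rw [Finset.card_univ] at h2
    have h5 : ({c, d} : Finset V).card ≤ 2 :=
      le_trans (Finset.card_insert_le _ _) (by simp)
    have h4 : ({b, c, d} : Finset V).card ≤ 3 :=
      le_trans (Finset.card_insert_le _ _) (by omega)
    have h3 : ({a, b, c, d} : Finset V).card ≤ 4 :=
      le_trans (Finset.card_insert_le _ _) (by omega)
    omega

end AuxStatement11

/-- Let `G` be a connected triangle-free graph with no full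
star-cutset. Then `G` has no cut-vertex of degree at least 3; moreover, if `G` is
not a path on at most 4 vertices, then every vertex of `G` has degree at least 2. -/

theorem no_full_star_cutset_structure
    {V : Type} [Fintype V] (G : SimpleGraph V)
    (hconn : G.Connected) (htf : G.CliqueFree 3) (hnsc : ¬ HasFullStarCutset G) :
    (∀ v : V, 3 ≤ (G.neighborSet v).ncard → ¬ IsCutVertex G v) ∧
      (¬ (IsPathGraph G ∧ Fintype.card V ≤ 4) →
        ∀ v : V, 2 ≤ (G.neighborSet v).ncard) := by
  classical
  have hnsc' : ∀ u : V, (G.induce ((closedNbhd G u)ᶜ)).Preconnected := by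
    intro u
    by_contra h
    exact hnsc ⟨u, h⟩
  have part1 : ∀ v : V, 3 ≤ (G.neighborSet v).ncard → ¬ IsCutVertex G v := by
    intro v hdeg hcut
    obtain ⟨w, hvw, hpend⟩ := aux_pendant_of_cut hconn htf hnsc' hcut
    have hwmem : w ∈ G.neighborSet v := hvw
    have hdiff := Set.ncard_diff_singleton_add_one hwmem (Set.toFinite _)
    have h2 : 1 < (G.neighborSet v \ {w}).ncard := by omega
    obtain ⟨x, y, hx, hy, hxy⟩ := (Set.one_lt_ncard_iff (Set.toFinite _)).mp h2
    have hxv : G.Adj v x := hx.1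
    have hyv : G.Adj v y := hy.1
    have hxw : x ≠ w := fun h => hx.2 (Set.mem_singleton_iff.mpr h)
    have hyw : y ≠ w := fun h => hy.2 (Set.mem_singleton_iff.mpr h)
    have hkey := aux_complement hnsc' hvw hpend hxv.symm hxw
    have hyx : y ∉ closedNbhd G x := by
      intro hmem
      simp only [closedNbhd, Set.mem_insert_iff, SimpleGraph.mem_neighborSet] at hmem
      rcases hmem with h | h
      · exact hxy h.symm
      · exact htf {v, x, y} (SimpleGraph.is3Clique_triple_iff.mpr ⟨hxv, hyv, h⟩)
    exact hyw (hkey y hyx)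
  refine ⟨part1, ?_⟩
  intro hnp v
  by_contra hlt
  push_neg at hlt
  apply hnp
  have : (G.neighborSet v).ncard = 0 ∨ (G.neighborSet v).ncard = 1 := by omega
  rcases this with h0 | h1
  · have hev : G.neighborSet v = ∅ := (Set.ncard_eq_zero (Set.toFinite _)).mp h0
    have hcov : ∀ z : V, z = v := by
      intro z
      have hcl : ∀ s ∈ ({v} : Set V), ∀ t, G.Adj s t → t ∈ ({v} : Set V) := by
        intro s hs t hst
        rw [Set.mem_singleton_iff] at hs
        rw [hs] at hst
        have h1 : t ∈ G.neighborSet v := hst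
        rw [hev] at h1
        exact absurd h1 (Set.notMem_empty t)
      obtain ⟨p⟩ := hconn.preconnected v z
      exact aux_walk_closed hcl p rfl
    exact aux_path1 hcov
  · obtain ⟨b, hb⟩ := Set.ncard_eq_one.mp h1
    have hvb : G.Adj v b := by
      have : b ∈ G.neighborSet v := by rw [hb]; rfl
      exact this
    have hpend : ∀ z, G.Adj v z → z = b := by
      intro z hz
      have : z ∈ G.neighborSet v := hz
      rw [hb] at this
      exact this
    have hbv : G.Adj b v := hvb.symm
    have cutfree : ∀ (c u y : V), G.Adj c u → (∀ z, G.Adj u z → z = c) → y ≠ u → y ≠ c →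
        (G.neighborSet c).ncard ≤ 2 := by
      intro c u y hcu hup hyu hyc
      by_contra h
      push_neg at h
      refine part1 c (by omega) ?_
      intro hpre
      refine hyu (aux_iso_eq hpre (w := u) hcu.ne' (fun z hz => ?_) hyc)
      rw [hup z hz]
      simp
    have hdegb : (G.neighborSet b).ncard ≤ 2 := by
      by_contra h
      push_neg at h
      have hvmem : v ∈ G.neighborSet b := hbv
      have hdiff := Set.ncard_diff_singleton_add_one hvmem (Set.toFinite _)
      have hpos : 0 < (G.neighborSet b \ {v}).ncard := by omega
      obtain ⟨x, hxmem⟩ := (Set.ncard_pos (Set.toFinite _)).mp hpos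
      have hbx : G.Adj b x := hxmem.1
      have hxv : x ≠ v := fun hh => hxmem.2 (Set.mem_singleton_iff.mpr hh)
      exact absurd (cutfree b v x hbv hpend hxv hbx.ne') (by omega)
    have hbpos : 0 < (G.neighborSet b).ncard :=
      (Set.ncard_pos (Set.toFinite _)).mpr ⟨v, hbv⟩
    have : (G.neighborSet b).ncard = 1 ∨ (G.neighborSet b).ncard = 2 := by omega
    rcases this with hb1 | hb2
    · have hNb : G.neighborSet b = {v} := by
        obtain ⟨c, hc⟩ := Set.ncard_eq_one.mp hb1
        have hvc : v ∈ ({c} : Set V) := by rw [← hc]; exact hbv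
        rw [Set.mem_singleton_iff] at hvc
        rw [hc, hvc]
      have hcov : ∀ z : V, z = v ∨ z = b := by
        intro z
        have hcl : ∀ s ∈ {z : V | z = v ∨ z = b}, ∀ t, G.Adj s t →
            t ∈ {z : V | z = v ∨ z = b} := by
          intro s hs t hst
          rcases hs with hs | hs
          · rw [hs] at hst
            exact Or.inr (hpend t hst)
          · rw [hs] at hst
            have h1 : t ∈ G.neighborSet b := hst
            rw [hNb] at h1
            exact Or.inl h1
        obtain ⟨p⟩ := hconn.preconnected v z
        exact aux_walk_closed hcl p (Or.inl rfl)
      exact aux_path2 hvb.ne hcov hvb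
    · obtain ⟨c, d, hcd, hNb⟩ := Set.ncard_eq_two.mp hb2
      have hvmem : v ∈ ({c, d} : Set V) := by rw [← hNb]; exact hbv
      obtain ⟨x, hxne, hNb2⟩ : ∃ x, x ≠ v ∧ G.neighborSet b = {v, x} := by
        rcases hvmem with h | h
        · exact ⟨d, fun hh => hcd (by rw [← h, hh]), by rw [hNb, ← h]⟩
        · rw [Set.mem_singleton_iff] at h
          exact ⟨c, fun hh => hcd (hh.trans h), by rw [hNb, ← h, Set.pair_comm]⟩
      have hbx : G.Adj b x := by
        have : x ∈ G.neighborSet b := by rw [hNb2]; exact Or.inr rfl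
        exact this
      have hNbmem : ∀ z, G.Adj b z → z = v ∨ z = x := by
        intro z hz
        have : z ∈ G.neighborSet b := hz
        rw [hNb2] at this
        exact this
      have hxb : x ≠ b := hbx.ne'
      have hkey : ∀ y, y ∉ closedNbhd G x → y = v :=
        aux_complement hnsc' hbv hpend hbx.symm hxne
      have hcov0 : ∀ z : V, z = v ∨ z = x ∨ G.Adj x z := by
        intro z
        by_cases hz : z ∈ closedNbhd G x
        · simp only [closedNbhd, Set.mem_insert_iff, SimpleGraph.mem_neighborSet] at hz
          rcases hz with h | h
          · exact Or.inr (Or.inl h)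
          · exact Or.inr (Or.inr h)
        · exact Or.inl (hkey z hz)
      have huniq : ∀ u, G.Adj x u → u ≠ b → ∀ z, G.Adj u z → z = x := by
        intro u hxu hub z huz
        rcases hcov0 z with h | h | hxz
        · rw [h] at huz
          exact absurd (hpend u huz.symm) hub
        · exact h
        · exact absurd (SimpleGraph.is3Clique_triple_iff.mpr ⟨hxu, hxz, huz⟩) (htf {x, u, z})
      have hunv : ∀ u, G.Adj x u → u ≠ v := by
        intro u hxu hh
        rw [hh] at hxu
        exact hxb (hpend x hxu.symm)
      have hdegx : (G.neighborSet x).ncard ≤ 2 := by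
        by_contra h
        push_neg at h
        have hbmem : b ∈ G.neighborSet x := hbx.symm
        have hdiff := Set.ncard_diff_singleton_add_one hbmem (Set.toFinite _)
        have hpos : 0 < (G.neighborSet x \ {b}).ncard := by omega
        obtain ⟨u, humem⟩ := (Set.ncard_pos (Set.toFinite _)).mp hpos
        have hxu : G.Adj x u := humem.1
        have hub : u ≠ b := fun hh => humem.2 (Set.mem_singleton_iff.mpr hh)
        exact absurd (cutfree x u b hxu (huniq u hxu hub) (Ne.symm hub) hbx.ne) (by omega)
      have hxpos : 0 < (G.neighborSet x).ncard :=
        (Set.ncard_pos (Set.toFinite _)).mpr ⟨b, hbx.symm⟩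
      have : (G.neighborSet x).ncard = 1 ∨ (G.neighborSet x).ncard = 2 := by omega
      have nvx : ¬ G.Adj v x := fun h => hxb (hpend x h)
      rcases this with hx1 | hx2
      · have hNx : G.neighborSet x = {b} := by
          obtain ⟨c', hc'⟩ := Set.ncard_eq_one.mp hx1
          have hbc' : b ∈ ({c'} : Set V) := by rw [← hc']; exact hbx.symm
          rw [Set.mem_singleton_iff] at hbc'
          rw [hc', hbc']
        have hcov : ∀ z : V, z = v ∨ z = b ∨ z = x := by
          intro z
          rcases hcov0 z with h | h | h
          · exact Or.inl h
          · exact Or.inr (Or.inr h)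
          · have : z ∈ G.neighborSet x := h
            rw [hNx] at this
            exact Or.inr (Or.inl this)
        exact aux_path3 hvb.ne (Ne.symm hxne) hbx.ne hcov hvb hbx nvx
      · obtain ⟨c', d', hcd', hNx⟩ := Set.ncard_eq_two.mp hx2
        have hbmem' : b ∈ ({c', d'} : Set V) := by rw [← hNx]; exact hbx.symm
        obtain ⟨u, hune, hNx2⟩ : ∃ u, u ≠ b ∧ G.neighborSet x = {b, u} := by
          rcases hbmem' with h | h
          · exact ⟨d', fun hh => hcd' (by rw [← h, hh]), by rw [hNx, ← h]⟩
          · rw [Set.mem_singleton_iff] at h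
            exact ⟨c', fun hh => hcd' (hh.trans h), by rw [hNx, ← h, Set.pair_comm]⟩
        have hxu : G.Adj x u := by
          have : u ∈ G.neighborSet x := by rw [hNx2]; exact Or.inr rfl
          exact this
        have huv : u ≠ v := hunv u hxu
        have hcov : ∀ z : V, z = v ∨ z = b ∨ z = x ∨ z = u := by
          intro z
          rcases hcov0 z with h | h | h
          · exact Or.inl h
          · exact Or.inr (Or.inr (Or.inl h))
          · have h1 : z ∈ G.neighborSet x := h
            rw [hNx2] at h1
            rcases h1 with h1 | h1
            · exact Or.inr (Or.inl h1)
            · exact Or.inr (Or.inr (Or.inr h1))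
        have nvu : ¬ G.Adj v u := fun h => hune (hpend u h)
        have nbu : ¬ G.Adj b u := by
          intro h
          rcases hNbmem u h with h' | h'
          · exact huv h'
          · exact hxu.ne' h'
        exact aux_path4 hvb.ne (Ne.symm hxne) (Ne.symm huv) hbx.ne (Ne.symm hune) hxu.ne
          hcov hvb hbx hxu nvx nvu nbu
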